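/- Let X_i, X_j, X_k, X_{ij}, X_{jk}, X_{ik} be nonzero real numbers and α_i, α_j, α_k nonzero real parameters such that the three corner equations of the form (E_i): ((α_j X_i − X_{ij})/X_i)·((α_i X_i − α_j X_j)/(α_j X_i − α_i X_j))·(X_i/(α_k X_i − X_{ik}))·((α_k X_i − α_i X_k)/(α_i X_i − α_k X_k)) = 1 hold at the vertices x_i, x_j, and x_k (the latter two obtained by cyclic substitutions (i,j,k)→(j,k,i) and (i,j,k)→(k,i,j)), with all appearing denominators nonzero. Then the product of the left-hand sides of the three equations equals 1 identically reduces, after cancellation of the Λ-legs, to the relation ((α_j X_i − X_{ij})(α_k X_j − X_{jk})(α_i X_k − X_{ik})) = ((α_k X_i − X_{ik})(α_i X_j − X_{ij})(α_j X_k − X_{jk})). -/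

import Mathlib

theorem stmt14 (Xi Xj Xk Xij Xjk Xik ai aj ak : ℝ)
    (hXi : Xi ≠ 0) (hXj : Xj ≠ 0) (hXk : Xk ≠ 0)
    (hXij : Xij ≠ 0) (hXjk : Xjk ≠ 0) (hXik : Xik ≠ 0)
    (hai : ai ≠ 0) (haj : aj ≠ 0) (hak : ak ≠ 0)
    (d1 : aj * Xi - ai * Xj ≠ 0) (d2 : ak * Xi - Xik ≠ 0)
    (d3 : ai * Xi - ak * Xk ≠ 0)
    (d4 : ak * Xj - aj * Xk ≠ 0) (d5 : ai * Xj - Xij ≠ 0)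
    (d6 : aj * Xj - ai * Xi ≠ 0)
    (d7 : ai * Xk - ak * Xi ≠ 0) (d8 : aj * Xk - Xjk ≠ 0)
    (d9 : ak * Xk - aj * Xj ≠ 0)
    (hEi : ((aj * Xi - Xij) / Xi) * ((ai * Xi - aj * Xj) / (aj * Xi - ai * Xj))
        * (Xi / (ak * Xi - Xik)) * ((ak * Xi - ai * Xk) / (ai * Xi - ak * Xk)) = 1)
    (hEj : ((ak * Xj - Xjk) / Xj) * ((aj * Xj - ak * Xk) / (ak * Xj - aj * Xk))
        * (Xj / (ai * Xj - Xij)) * ((ai * Xj - aj * Xi) / (aj * Xj - ai * Xi)) = 1)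
    (hEk : ((ai * Xk - Xik) / Xk) * ((ak * Xk - ai * Xi) / (ai * Xk - ak * Xi))
        * (Xk / (aj * Xk - Xjk)) * ((aj * Xk - ak * Xj) / (ak * Xk - aj * Xj)) = 1) :
    (aj * Xi - Xij) * (ak * Xj - Xjk) * (ai * Xk - Xik)
      = (ak * Xi - Xik) * (ai * Xj - Xij) * (aj * Xk - Xjk) := by
  have h1 : (aj*Xi - Xij)*(ai*Xi - aj*Xj)*Xi*(ak*Xi - ai*Xk)
      = Xi*(aj*Xi - ai*Xj)*(ak*Xi - Xik)*(ai*Xi - ak*Xk) := by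
    rw [div_mul_div_comm, div_mul_div_comm, div_mul_div_comm, div_eq_one_iff_eq (mul_ne_zero (mul_ne_zero (mul_ne_zero hXi d1) d2) d3)] at hEi; linear_combination hEi
  have h2 : (ak*Xj - Xjk)*(aj*Xj - ak*Xk)*Xj*(ai*Xj - aj*Xi)
      = Xj*(ak*Xj - aj*Xk)*(ai*Xj - Xij)*(aj*Xj - ai*Xi) := by
    rw [div_mul_div_comm, div_mul_div_comm, div_mul_div_comm, div_eq_one_iff_eq (mul_ne_zero (mul_ne_zero (mul_ne_zero hXj d4) d5) d6)] at hEj; linear_combination hEj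
  have h3 : (ai*Xk - Xik)*(ak*Xk - ai*Xi)*Xk*(aj*Xk - ak*Xj)
      = Xk*(ai*Xk - ak*Xi)*(aj*Xk - Xjk)*(ak*Xk - aj*Xj) := by
    rw [div_mul_div_comm, div_mul_div_comm, div_mul_div_comm, div_eq_one_iff_eq (mul_ne_zero (mul_ne_zero (mul_ne_zero hXk d7) d8) d9)] at hEk; linear_combination hEk
  have C : Xi*Xj*Xk*(aj*Xi - ai*Xj)*(ai*Xi - ak*Xk)*(ak*Xj - aj*Xk)
      *(aj*Xj - ai*Xi)*(ai*Xk - ak*Xi)*(ak*Xk - aj*Xj) ≠ 0 := by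
    exact mul_ne_zero (mul_ne_zero (mul_ne_zero (mul_ne_zero (mul_ne_zero (mul_ne_zero (mul_ne_zero (mul_ne_zero hXi hXj) hXk) d1) d3) d4) d6) d7) d9
  apply mul_right_cancel₀ C
  linear_combination ((ak*Xj - Xjk)*(aj*Xj - ak*Xk)*Xj*(ai*Xj - aj*Xi))*((ai*Xk - Xik)*(ak*Xk - ai*Xi)*Xk*(aj*Xk - ak*Xj))*h1
    + (Xi*(aj*Xi - ai*Xj)*(ak*Xi - Xik)*(ai*Xi - ak*Xk))*((ai*Xk - Xik)*(ak*Xk - ai*Xi)*Xk*(aj*Xk - ak*Xj))*h2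
    + (Xi*(aj*Xi - ai*Xj)*(ak*Xi - Xik)*(ai*Xi - ak*Xk))*(Xj*(ak*Xj - aj*Xk)*(ai*Xj - Xij)*(aj*Xj - ai*Xi))*h3
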